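/- The product of a family {𝒜ᵢ}ᵢ of polarities in Pol exists and is given by Π𝒜ᵢ whose lower set is the disjoint union Σᵢ Aᵢ⁻, whose upper set is the disjoint union Σᵢ Aᵢ⁺, with incidence (ⱼa) Π𝒜ᵢ (ₖα) iff (j = k implies a 𝒜ₖ α). The projections Pₖ ⊆ (Σᵢ Aᵢ⁻) × Aₖ⁺ defined by ⱼa Pₖ α iff (j = k implies a 𝒜ₖ α) are compatible relations, and for any polarity ℬ and compatible relations Rᵢ : ℬ → 𝒜ᵢ, the relation T defined by b T (ᵢα) iff b Rᵢ α is the unique compatible relation with T ⨟ Pₖ = Rₖ for all k. -/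
import Mathlib


def down {A B : Type*} (R : A → B → Prop) (Y : Set B) : Set A := {a | ∀ b ∈ Y, R a b}
def up {A B : Type*} (R : A → B → Prop) (X : Set A) : Set B := {b | ∀ a ∈ X, R a b}
def bracket {A B : Type*} (f : Set B → Set A) : A → B → Prop := fun a b => a ∈ f {b}
def Compat {Am Ap Bm Bp : Type*} (A : Am → Ap → Prop) (B : Bm → Bp → Prop)
    (R : Am → Bp → Prop) : Prop :=
  (∀ Y : Set Bp, down A (up A (down R Y)) = down R Y) ∧
  (∀ Y : Set Bp, down R (up B (down B Y)) = down R Y)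
def comp {Am Bm Bp Cp : Type*} (R : Am → Bp → Prop) (B : Bm → Bp → Prop)
    (S : Bm → Cp → Prop) : Am → Cp → Prop :=
  fun a c => a ∈ down R (up B (down S {c}))

section helpers
variable {Am Ap : Type*} (A : Am → Ap → Prop)

lemma down_anti {Y Y' : Set Ap} (h : Y ⊆ Y') : down A Y' ⊆ down A Y :=
  fun a ha b hb => ha b (h hb)

lemma up_anti {X X' : Set Am} (h : X ⊆ X') : up A X' ⊆ up A X :=
  fun b hb a ha => hb a (h ha)

lemma subset_down_up (X : Set Am) : X ⊆ down A (up A X) :=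
  fun a ha b hb => hb a ha

lemma subset_up_down (Y : Set Ap) : Y ⊆ up A (down A Y) :=
  fun b hb a ha => ha b hb

lemma down_up_down (Y : Set Ap) : down A (up A (down A Y)) = down A Y :=
  Set.Subset.antisymm (down_anti A (subset_up_down A Y)) (subset_down_up A (down A Y))

end helpers

theorem stmt19 {ι : Type*} {An Ap : ι → Type*} (A : ∀ i, An i → Ap i → Prop)
    {Bm Bp : Type*} (B : Bm → Bp → Prop) :
    let PA : (Σ i, An i) → (Σ i, Ap i) → Prop :=
      fun x y => ∀ h : x.1 = y.1, A y.1 (h ▸ x.2) y.2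
    let proj : ∀ k, (Σ i, An i) → Ap k → Prop :=
      fun k x α => ∀ h : x.1 = k, A k (h ▸ x.2) α
    (∀ k, Compat PA (A k) (proj k)) ∧
    ∀ R : ∀ i, Bm → Ap i → Prop, (∀ i, Compat B (A i) (R i)) →
      let T : Bm → (Σ i, Ap i) → Prop := fun b y => R y.1 b y.2
      Compat B PA T ∧ (∀ k, comp T PA (proj k) = R k) ∧
      (∀ T' : Bm → (Σ i, Ap i) → Prop, Compat B PA T' →
        (∀ k, comp T' PA (proj k) = R k) → T' = T) := by
  intro PA proj
  have hdownPA : ∀ (Z : Set (Σ i, Ap i)) (j : ι) (a : An j),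
      (⟨j, a⟩ : Σ i, An i) ∈ down PA Z ↔
        ∀ α : Ap j, (⟨j, α⟩ : Σ i, Ap i) ∈ Z → A j a α := by
    intro Z j a
    constructor
    · intro h α hα
      exact h ⟨j, α⟩ hα rfl
    · rintro h ⟨j', α⟩ hy hj
      dsimp at hj
      subst hj
      exact h α hy
  have hupPA : ∀ (X : Set (Σ i, An i)) (j : ι) (α : Ap j),
      (⟨j, α⟩ : Σ i, Ap i) ∈ up PA X ↔
        ∀ a : An j, (⟨j, a⟩ : Σ i, An i) ∈ X → A j a α := by
    intro X j α
    constructor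
    · intro h a ha
      exact h ⟨j, a⟩ ha rfl
    · rintro h ⟨j', a⟩ ha hj
      dsimp at hj
      subst hj
      exact h a ha
  have hdproj : ∀ (k : ι) (Y : Set (Ap k)) (j : ι) (a : An j),
      (⟨j, a⟩ : Σ i, An i) ∈ down (proj k) Y ↔ ∀ h : j = k, h ▸ a ∈ down (A k) Y := by
    intro k Y j a
    constructor
    · intro hm h
      subst h
      intro α hα
      exact hm α hα rfl
    · intro hm α hα h
      subst h
      exact hm rfl α hα
  have hsingle : ∀ (k : ι) (α : Ap k),
      down (proj k) ({α} : Set (Ap k)) = down PA {⟨k, α⟩} := by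
    intro k α
    ext x
    constructor
    · rintro h y rfl
      exact h α rfl
    · rintro h β rfl
      exact h ⟨k, β⟩ rfl
  constructor
  · intro k
    constructor
    · intro Y
      ext ⟨j, a⟩
      rw [hdownPA, hdproj]
      constructor
      · intro H h
        subst h
        intro α hα
        apply H α
        rw [hupPA]
        intro a' ha'
        exact ((hdproj _ _ _ _).mp ha' rfl) α hα
      · intro H α hα
        exact (hupPA _ _ _).mp hα a ((hdproj _ _ _ _).mpr H)
    · intro Y
      ext ⟨j, a⟩
      rw [hdproj, hdproj, down_up_down]
  · intro R hR T
    have hdT : ∀ (Z : Set (Σ i, Ap i)) (b : Bm),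
        b ∈ down T Z ↔ ∀ j, b ∈ down (R j) {α | (⟨j, α⟩ : Σ i, Ap i) ∈ Z} := by
      intro Z b
      constructor
      · intro h j α hα
        exact h ⟨j, α⟩ hα
      · rintro h ⟨j, α⟩ hy
        exact h j α hy
    have c2T : ∀ Z, down T (up PA (down PA Z)) = down T Z := by
      intro Z
      ext b
      rw [hdT, hdT]
      apply forall_congr'
      intro j
      have hset : {α | (⟨j, α⟩ : Σ i, Ap i) ∈ up PA (down PA Z)} =
          up (A j) (down (A j) {α | (⟨j, α⟩ : Σ i, Ap i) ∈ Z}) := by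
        ext α
        rw [Set.mem_setOf_eq, hupPA]
        constructor
        · intro h a ha
          exact h a ((hdownPA _ _ _).mpr ha)
        · intro h a ha
          exact h a ((hdownPA _ _ _).mp ha)
      rw [hset, (hR j).2]
    have hcompgen : ∀ (T' : Bm → (Σ i, Ap i) → Prop),
        (∀ Z, down T' (up PA (down PA Z)) = down T' Z) →
        ∀ k, comp T' PA (proj k) = fun b α => T' b ⟨k, α⟩ := by
      intro T' h2 k
      funext b α
      show (b ∈ down T' (up PA (down (proj k) {α}))) = _
      rw [hsingle, h2]
      apply propext
      constructor
      · intro h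
        exact h _ rfl
      · rintro h y rfl
        exact h
    refine ⟨⟨?_, c2T⟩, ?_, ?_⟩
    · intro Z
      apply Set.Subset.antisymm
      · intro b hb
        rw [hdT]
        intro j
        have sub : down T Z ⊆ down (R j) {α | (⟨j, α⟩ : Σ i, Ap i) ∈ Z} := by
          intro b' hb'
          exact (hdT Z b').mp hb' j
        have key : down B (up B (down T Z)) ⊆ down (R j) {α | (⟨j, α⟩ : Σ i, Ap i) ∈ Z} := by
          rw [← (hR j).1]
          exact down_anti B (up_anti B sub)
        exact key hb
      · exact subset_down_up B (down T Z)
    · intro k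
      exact hcompgen T c2T k
    · intro T' hT'c hT'
      funext b y
      obtain ⟨k, α⟩ := y
      have h1 := hcompgen T' hT'c.2 k
      have h2 := h1.symm.trans (hT' k)
      exact congrFun (congrFun h2 b) α
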